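/- arXiv:1912.12717 — 6 statements merged into one kernel-verified Lean document; each statement's English description precedes it below -/
import Mathlib

section
/- For every finite nonempty set E and every injective weight function w : E → ℝ with w_e > 0 for all e ∈ E, there exists a real number p > 0 that is a dominant power, i.e. such that for every e ∈ E one has w_e^p > ∑_{s ∈ E, w_s < w_e} w_s^p. -/
/-- For every finite nonempty set `E` and every injective, positive weight function
`w : E → ℝ`, there exists a real number `p > 0` that is a *dominant power*, i.e.
for every `e ∈ E` one has `w e ^ p > ∑_{s : w s < w e} w s ^ p`. -/
theorem dominant_power_exists {E : Type*} [Fintype E] [Nonempty E]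
    (w : E → ℝ) (hinj : Function.Injective w) (hpos : ∀ e, 0 < w e) :
    ∃ p : ℝ, 0 < p ∧ ∀ e : E,
      (∑ s ∈ Finset.univ.filter (fun s => w s < w e), w s ^ p) < w e ^ p := by
  set n : ℕ := Fintype.card E with hn
  have hn0 : 0 < n := Fintype.card_pos
  have hninv : 0 < (1 : ℝ) / n := by positivity
  have key : ∀ᶠ p : ℝ in Filter.atTop, ∀ s e : E, w s < w e → (w s / w e) ^ p < 1 / n := by
    rw [Filter.eventually_all]
    intro s
    rw [Filter.eventually_all]
    intro e
    by_cases hse : w s < w e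
    · simp only [hse, forall_true_left]
      have hr0 : 0 ≤ w s / w e := le_of_lt (div_pos (hpos s) (hpos e))
      have hr1 : w s / w e < 1 := (div_lt_one (hpos e)).2 hse
      have := tendsto_rpow_atTop_of_base_lt_one (w s / w e) (by linarith) hr1
      exact this.eventually_lt_const hninv
    · filter_upwards with p h; exact absurd h hse
  obtain ⟨p, hp, hp1⟩ := (key.and (Filter.eventually_ge_atTop 1)).exists
  refine ⟨p, by linarith, fun e => ?_⟩
  have hwe : 0 < w e ^ p := Real.rpow_pos_of_pos (hpos e) p
  set F := Finset.univ.filter (fun s => w s < w e) with hF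
  rcases F.eq_empty_or_nonempty with h | h
  · rw [h, Finset.sum_empty]; exact hwe
  · have step : ∀ s ∈ F, w s ^ p < (1 / n) * w e ^ p := by
      intro s hs
      have hse : w s < w e := (Finset.mem_filter.1 hs).2
      have := hp s e hse
      have hdiv : (w s / w e) ^ p = w s ^ p / w e ^ p :=
        Real.div_rpow (le_of_lt (hpos s)) (le_of_lt (hpos e)) p
      rw [hdiv, div_lt_iff₀ hwe] at this
      linarith
    calc (∑ s ∈ F, w s ^ p) < ∑ s ∈ F, (1 / n) * w e ^ p :=
          Finset.sum_lt_sum_of_nonempty h step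
      _ = F.card * ((1 / n) * w e ^ p) := by rw [Finset.sum_const, nsmul_eq_mul]
      _ ≤ n * ((1 / n) * w e ^ p) := by
          apply mul_le_mul_of_nonneg_right _ (by positivity)
          exact_mod_cast Finset.card_le_card (Finset.subset_univ F) |>.trans_eq
            (by simp [hn])
      _ = w e ^ p := by field_simp
end

section
/- Let E be a finite set with positive, pairwise distinct weights w : E → ℝ and let p > 0 be a dominant power. Then for any two subsets A, B ⊆ E with A ≠ B, if the maximum-weight element e of the symmetric difference A Δ B belongs to A, then ∑_{s ∈ A} w_s^p > ∑_{s ∈ B} w_s^p. In particular, the map A ↦ ∑_{s ∈ A} w_s^p is injective on subsets of E. -/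
/-- `p` is a dominant power for the weights `w` if for every edge `e`,
`w e ^ p` strictly exceeds the sum of `w s ^ p` over all `s` with `w s < w e`. -/
def DominantPower {E : Type*} [Fintype E] (w : E → ℝ) (p : ℝ) : Prop :=
  ∀ e : E, (∑ s ∈ Finset.univ.filter (fun s => w s < w e), w s ^ p) < w e ^ p

/-- Let `p > 0` be a dominant power for positive, pairwise distinct weights `w`.
For any two distinct subsets `A, B`, if the maximum-weight element `e` of the
symmetric difference of `A` and `B` belongs to `A`, then
`∑_{s ∈ A} w s ^ p > ∑_{s ∈ B} w s ^ p`.  In particular the map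
`A ↦ ∑_{s ∈ A} w s ^ p` is injective on subsets of `E`. -/
theorem sum_pow_symmDiff_max_and_injective {E : Type*} [Fintype E] [DecidableEq E]
    (w : E → ℝ) (hpos : ∀ e, 0 < w e) (hinj : Function.Injective w)
    (p : ℝ) (hp : 0 < p) (hdom : DominantPower w p) :
    (∀ A B : Finset E, A ≠ B → ∀ e ∈ (A \ B) ∪ (B \ A),
        (∀ s ∈ (A \ B) ∪ (B \ A), s ≠ e → w s < w e) → e ∈ A →
        (∑ s ∈ B, w s ^ p) < ∑ s ∈ A, w s ^ p) ∧
    Function.Injective (fun A : Finset E => ∑ s ∈ A, w s ^ p) := by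
  have key : ∀ A B : Finset E, A ≠ B → ∀ e ∈ (A \ B) ∪ (B \ A),
      (∀ s ∈ (A \ B) ∪ (B \ A), s ≠ e → w s < w e) → e ∈ A →
      (∑ s ∈ B, w s ^ p) < ∑ s ∈ A, w s ^ p := by
    intro A B _ e he hmax heA
    have heAB : e ∈ A \ B := by
      rcases Finset.mem_union.1 he with h | h
      · exact h
      · exact absurd heA (Finset.mem_sdiff.1 h).2.elim
    have hsplitA : (∑ s ∈ A, w s ^ p) = (∑ s ∈ A ∩ B, w s ^ p) + ∑ s ∈ A \ B, w s ^ p := by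
      rw [← Finset.sum_inter_add_sum_sdiff]
    have hsplitB : (∑ s ∈ B, w s ^ p) = (∑ s ∈ A ∩ B, w s ^ p) + ∑ s ∈ B \ A, w s ^ p := by
      rw [Finset.inter_comm, ← Finset.sum_inter_add_sum_sdiff B A fun s => w s ^ p]
    have hBA : (∑ s ∈ B \ A, w s ^ p) < w e ^ p := by
      refine lt_of_le_of_lt ?_ (hdom e)
      refine Finset.sum_le_sum_of_subset_of_nonneg ?_ ?_
      · intro s hs
        have hsne : s ≠ e := fun h => (Finset.mem_sdiff.1 hs).2 (h ▸ heA)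
        exact Finset.mem_filter.2 ⟨Finset.mem_univ s,
          hmax s (Finset.mem_union_right _ hs) hsne⟩
      · intro s _ _
        exact (Real.rpow_pos_of_pos (hpos s) p).le
    have hAe : w e ^ p ≤ ∑ s ∈ A \ B, w s ^ p := by
      refine Finset.single_le_sum (fun s _ => (Real.rpow_pos_of_pos (hpos s) p).le) heAB
    rw [hsplitA, hsplitB]
    exact add_lt_add_right (lt_of_lt_of_le hBA hAe) _
  refine ⟨key, ?_⟩
  intro A B hsum
  by_contra hne
  have hSne : ((A \ B) ∪ (B \ A)).Nonempty := by
    rw [Finset.nonempty_iff_ne_empty]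
    intro h
    rw [Finset.union_eq_empty, Finset.sdiff_eq_empty_iff_subset,
      Finset.sdiff_eq_empty_iff_subset] at h
    exact hne (Finset.Subset.antisymm h.1 h.2)
  obtain ⟨e, heS, hemax⟩ := Finset.exists_max_image _ w hSne
  have hmax : ∀ s ∈ (A \ B) ∪ (B \ A), s ≠ e → w s < w e := by
    intro s hs hsne
    exact lt_of_le_of_ne (hemax s hs) (fun h => hsne (hinj h))
  rcases Finset.mem_union.1 heS with h | h
  · have := key A B hne e heS hmax (Finset.mem_sdiff.1 h).1
    simp only at hsum
    linarith
  · have hmax' : ∀ s ∈ (B \ A) ∪ (A \ B), s ≠ e → w s < w e := by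
      intro s hs hsne
      exact hmax s (by rwa [Finset.union_comm]) hsne
    have := key B A (Ne.symm hne) e (by rwa [Finset.union_comm] at heS) hmax'
      (Finset.mem_sdiff.1 h).1
    simp only at hsum
    linarith
end

section
/- Let E be a finite set with positive, pairwise distinct weights w : E → ℝ, let p > 0 be a dominant power, and let F be a downward-closed family of subsets of E (A ⊆ B and B ∈ F imply A ∈ F) with ∅ ∈ F. Let e₁ be the maximum-weight element of E such that {e₁} ∈ F. Then every A ∈ F maximizing ∑_{e ∈ A} w_e^p over F contains e₁ (greedy choice property). -/
/-- Greedy choice property: for a downward-closed family `F` containing `∅`, if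
`e₁` is the maximum-weight element with `{e₁} ∈ F`, then every `A ∈ F`
maximizing `∑_{e ∈ A} w e ^ p` over `F` contains `e₁`. -/
theorem greedy_choice_property {E : Type*} [Fintype E]
    (w : E → ℝ) (hpos : ∀ e, 0 < w e) (hinj : Function.Injective w)
    (p : ℝ) (hp : 0 < p) (hdom : DominantPower w p)
    (F : Set (Finset E))
    (hdown : ∀ A B : Finset E, A ⊆ B → B ∈ F → A ∈ F)
    (hempty : (∅ : Finset E) ∈ F)
    (e₁ : E) (he₁ : ({e₁} : Finset E) ∈ F)
    (hmax : ∀ e : E, ({e} : Finset E) ∈ F → w e ≤ w e₁) :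
    ∀ A ∈ F, (∀ B ∈ F, (∑ s ∈ B, w s ^ p) ≤ ∑ s ∈ A, w s ^ p) → e₁ ∈ A := by
  intro A hA hopt
  by_contra he
  have hsub : A ⊆ Finset.univ.filter (fun s => w s < w e₁) := by
    intro e heA
    simp only [Finset.mem_filter, Finset.mem_univ, true_and]
    have hsing : ({e} : Finset E) ∈ F :=
      hdown {e} A (Finset.singleton_subset_iff.mpr heA) hA
    have := hmax e hsing
    rcases lt_or_eq_of_le this with h | h
    · exact h
    · exact absurd (hinj h ▸ heA) he
  have h1 : (∑ s ∈ A, w s ^ p) ≤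
      ∑ s ∈ Finset.univ.filter (fun s => w s < w e₁), w s ^ p :=
    Finset.sum_le_sum_of_subset_of_nonneg hsub
      (fun i _ _ => Real.rpow_nonneg (hpos i).le p)
  have h2 := hdom e₁
  have h3 := hopt {e₁} he₁
  simp only [Finset.sum_singleton] at h3
  linarith
end

section
/- Let E be a finite set with positive, pairwise distinct weights w : E → ℝ, let p > 0 be a dominant power, and let F be a downward-closed family of subsets of E with ∅ ∈ F. Consider the greedy algorithm that processes the elements of E in strictly descending order of weight, maintaining an active set A initialized to ∅, and adds element e to A whenever A ∪ {e} ∈ F. Then the set A returned by this algorithm maximizes ∑_{e ∈ A} w_e^p over all A ∈ F (abstract form of the Optimality of the Semantic Mutex Watershed lemma). -/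
open Classical in
/-- One step of the greedy algorithm: add the element `e` to the active set `A`
exactly when the enlarged set is still in the family `F`. -/
noncomputable def greedyStep {E : Type*} [DecidableEq E] (F : Set (Finset E))
    (A : Finset E) (e : E) : Finset E :=
  if insert e A ∈ F then insert e A else A

/-- The greedy algorithm: process the elements in the order given by the list
`l`, starting from the empty active set. -/
noncomputable def greedy {E : Type*} [DecidableEq E] (F : Set (Finset E))
    (l : List E) : Finset E :=
  l.foldl (greedyStep F) ∅


lemma subset_greedyStep {E : Type*} [DecidableEq E] (F : Set (Finset E))
    (A : Finset E) (e : E) : A ⊆ greedyStep F A e := by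
  unfold greedyStep; split
  · exact Finset.subset_insert _ _
  · exact subset_rfl

lemma greedyStep_subset_insert {E : Type*} [DecidableEq E] (F : Set (Finset E))
    (A : Finset E) (e : E) : greedyStep F A e ⊆ insert e A := by
  unfold greedyStep; split
  · exact subset_rfl
  · exact Finset.subset_insert _ _

lemma subset_foldl {E : Type*} [DecidableEq E] (F : Set (Finset E)) :
    ∀ (l : List E) (A : Finset E), A ⊆ l.foldl (greedyStep F) A := by
  intro l
  induction l with
  | nil => intro A; simp
  | cons h t ih => intro A; exact (subset_greedyStep F A h).trans (ih _)

lemma foldl_mem {E : Type*} [DecidableEq E] (F : Set (Finset E)) :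
    ∀ (l : List E) (A : Finset E), A ∈ F → l.foldl (greedyStep F) A ∈ F := by
  intro l
  induction l with
  | nil => intro A h; simpa using h
  | cons h t ih =>
    intro A hA
    apply ih
    unfold greedyStep; split
    · assumption
    · exact hA

lemma foldl_subset_union {E : Type*} [DecidableEq E] (F : Set (Finset E)) :
    ∀ (l : List E) (A : Finset E), l.foldl (greedyStep F) A ⊆ A ∪ l.toFinset := by
  intro l
  induction l with
  | nil => intro A; simp
  | cons h t ih =>
    intro A
    refine (ih _).trans ?_
    intro x hx
    rcases Finset.mem_union.mp hx with h1 | h1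
    · rcases Finset.mem_insert.mp (greedyStep_subset_insert F A h h1) with rfl | h2
      · simp
      · exact Finset.mem_union_left _ h2
    · simp [Finset.mem_union, h1]

/-- Optimality of the (abstract) Semantic Mutex Watershed: for a dominant power
`p > 0` and a downward-closed family `F` with `∅ ∈ F`, the greedy algorithm,
processing the elements of `E` in strictly descending order of weight,
returns a set in `F` maximizing `∑_{e ∈ A} w e ^ p` over all `A ∈ F`. -/
theorem greedy_maximizes {E : Type*} [Fintype E] [DecidableEq E]
    (w : E → ℝ) (hpos : ∀ e, 0 < w e) (hinj : Function.Injective w)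
    (p : ℝ) (hp : 0 < p) (hdom : DominantPower w p)
    (F : Set (Finset E))
    (hdown : ∀ A B : Finset E, A ⊆ B → B ∈ F → A ∈ F)
    (hempty : (∅ : Finset E) ∈ F)
    (l : List E) (hmem : ∀ e : E, e ∈ l) (hnodup : l.Nodup)
    (hsorted : l.Pairwise (fun a b => w b < w a)) :
    greedy F l ∈ F ∧
      ∀ B ∈ F, (∑ s ∈ B, w s ^ p) ≤ ∑ s ∈ greedy F l, w s ^ p := by
  classical
  set A := greedy F l with hA
  have hAF : A ∈ F := foldl_mem F l ∅ hempty
  refine ⟨hAF, ?_⟩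
  intro B hB
  set D := (A \ B) ∪ (B \ A) with hD
  by_cases hDe : D = ∅
  · have hAB : A = B := by
      have h1 : A \ B = ∅ := by
        apply Finset.eq_empty_of_forall_notMem
        intro x hx
        exact (Finset.eq_empty_iff_forall_notMem.mp hDe x) (Finset.mem_union_left _ hx)
      have h2 : B \ A = ∅ := by
        apply Finset.eq_empty_of_forall_notMem
        intro x hx
        exact (Finset.eq_empty_iff_forall_notMem.mp hDe x) (Finset.mem_union_right _ hx)
      exact Finset.Subset.antisymm (Finset.sdiff_eq_empty_iff_subset.mp h1)
        (Finset.sdiff_eq_empty_iff_subset.mp h2)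
    rw [hAB]
  · obtain ⟨e, heD, hemax⟩ := Finset.exists_max_image D w (Finset.nonempty_iff_ne_empty.mpr hDe)
    have hagree : ∀ s, w e < w s → (s ∈ A ↔ s ∈ B) := by
      intro s hs
      constructor
      · intro hsA
        by_contra hsB
        have : s ∈ D := Finset.mem_union_left _ (Finset.mem_sdiff.mpr ⟨hsA, hsB⟩)
        exact absurd (hemax s this) (not_le.mpr hs)
      · intro hsB
        by_contra hsA
        have : s ∈ D := Finset.mem_union_right _ (Finset.mem_sdiff.mpr ⟨hsB, hsA⟩)
        exact absurd (hemax s this) (not_le.mpr hs)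
    rcases Finset.mem_union.mp heD with heA | heB
    · -- e ∈ A \ B : the sum over B is strictly smaller
      obtain ⟨heA, heB⟩ := Finset.mem_sdiff.mp heA
      set S1 := B.filter (fun s => w e < w s) with hS1
      set S2 := B.filter (fun s => ¬ w e < w s) with hS2
      have hsplit : (∑ s ∈ B, w s ^ p) = (∑ s ∈ S1, w s ^ p) + (∑ s ∈ S2, w s ^ p) :=
        (Finset.sum_filter_add_sum_filter_not B _ _).symm
      have hS1A : insert e S1 ⊆ A := by
        intro x hx
        rcases Finset.mem_insert.mp hx with rfl | hx
        · exact heA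
        · obtain ⟨hxB, hxw⟩ := Finset.mem_filter.mp hx
          exact (hagree x hxw).mpr hxB
      have heS1 : e ∉ S1 := fun h => heB (Finset.mem_filter.mp h).1
      have hS2small : S2 ⊆ Finset.univ.filter (fun s => w s < w e) := by
        intro x hx
        obtain ⟨hxB, hxw⟩ := Finset.mem_filter.mp hx
        have hne : w x ≠ w e := fun h => heB (hinj h ▸ hxB)
        exact Finset.mem_filter.mpr ⟨Finset.mem_univ _, lt_of_le_of_ne (not_lt.mp hxw) hne⟩
      have hS2lt : (∑ s ∈ S2, w s ^ p) < w e ^ p := by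
        calc (∑ s ∈ S2, w s ^ p) ≤ ∑ s ∈ Finset.univ.filter (fun s => w s < w e), w s ^ p := by
              apply Finset.sum_le_sum_of_subset_of_nonneg hS2small
              intro i _ _
              exact Real.rpow_nonneg (hpos i).le _
          _ < w e ^ p := hdom e
      have : (∑ s ∈ B, w s ^ p) < ∑ s ∈ insert e S1, w s ^ p := by
        rw [hsplit, Finset.sum_insert heS1]
        linarith
      refine this.le.trans ?_
      apply Finset.sum_le_sum_of_subset_of_nonneg hS1A
      intro i _ _
      exact Real.rpow_nonneg (hpos i).le _
    · -- e ∈ B \ A : impossible, greedy would have taken e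
      exfalso
      obtain ⟨heB, heA⟩ := Finset.mem_sdiff.mp heB
      obtain ⟨l₁, l₂, hl⟩ := List.append_of_mem (hmem e)
      set A₁ := l₁.foldl (greedyStep F) ∅ with hA₁
      have hAeq : A = l₂.foldl (greedyStep F) (greedyStep F A₁ e) := by
        rw [hA, greedy, hl, List.foldl_append, List.foldl_cons]
      have hrej : insert e A₁ ∉ F := by
        intro hmemF
        have hstep : greedyStep F A₁ e = insert e A₁ := by
          unfold greedyStep; rw [if_pos hmemF]
        have : e ∈ A := by
          rw [hAeq, hstep]
          exact subset_foldl F l₂ _ (Finset.mem_insert_self _ _)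
        exact heA this
      apply hrej
      apply hdown _ B _ hB
      intro x hx
      rcases Finset.mem_insert.mp hx with rfl | hx
      · exact heB
      · have hx1 : x ∈ l₁ := by
          have := foldl_subset_union F l₁ ∅ hx
          simpa using this
        have hwe : w e < w x := by
          rw [hl] at hsorted
          exact (List.pairwise_append.mp hsorted).2.2 x hx1 e List.mem_cons_self
        have hxA : x ∈ A := by
          rw [hAeq]
          exact subset_foldl F l₂ _ (subset_greedyStep F A₁ e hx)
        exact (hagree x hwe).mp hxA
end

section
/- Let V be a finite set of internal nodes and T a finite set of terminal nodes, with internal edges E ⊆ V × V and semantic edges connecting every internal node to every terminal. Let y assign a value in {0,1} to every internal and semantic edge and suppose: (i) ∑_{t ∈ T} y_{it} = |T| − 1 for every i ∈ V; (ii) y_{uv} ≥ y_{ut} − y_{vt} and y_{uv} ≥ y_{vt} − y_{ut} for every (u,v) ∈ E and every t ∈ T. Then for any two terminals t, t' ∈ T, if there exists a path t, v₁, …, v_k, t' with v₁, …, v_k ∈ V whose first and last edges are semantic and whose intermediate edges belong to E, and all of whose edges e satisfy y_e = 0, then t = t'. In other words, the Symmetric Multiway Cut consistency constraints imply the label constraint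 that no path of uncut edges connects two distinct terminal nodes. -/
/-- The Symmetric Multiway Cut consistency constraints imply the label
constraint.  Let `yE` be binary cut indicators on the internal edges `E` and
`yS i t` binary cut indicators on the semantic edges, satisfying
(i) `∑_{t ∈ T} yS i t = |T| - 1` for every internal node `i`, and
(ii) `yE (u,v) ≥ yS u t - yS v t` and `yE (u,v) ≥ yS v t - yS u t` for every
`(u,v) ∈ E` and every terminal `t`.  Then any path `t, v₀, …, v_n, t'` whose
first and last edges are semantic and uncut and whose intermediate edges belong
to `E` and are uncut forces `t = t'`: no path of uncut edges connects two
distinct terminal nodes. -/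
theorem smwc_implies_label_constraint {V T : Type*} [Fintype V] [Fintype T]
    (E : Set (V × V))
    (yE : V × V → ℤ) (yS : V → T → ℤ)
    (hyE : ∀ e, yE e = 0 ∨ yE e = 1)
    (hyS : ∀ i t, yS i t = 0 ∨ yS i t = 1)
    (hsum : ∀ i : V, (∑ t, yS i t) = (Fintype.card T : ℤ) - 1)
    (hcyc1 : ∀ u v, (u, v) ∈ E → ∀ t : T, yS u t - yS v t ≤ yE (u, v))
    (hcyc2 : ∀ u v, (u, v) ∈ E → ∀ t : T, yS v t - yS u t ≤ yE (u, v)) :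
    ∀ (t t' : T) (n : ℕ) (v : Fin (n + 1) → V),
      yS (v 0) t = 0 → yS (v (Fin.last n)) t' = 0 →
      (∀ i : Fin n,
        (v i.castSucc, v i.succ) ∈ E ∧ yE (v i.castSucc, v i.succ) = 0) →
      t = t' := by
  classical
  intro t t' n v h0 hlast hpath
  -- yS is constant along the path at each terminal
  have hconst : ∀ i : Fin (n + 1), ∀ s : T, yS (v i) s = yS (v 0) s := by
    intro i
    induction i using Fin.induction with
    | zero => intro s; rfl
    | succ j ih =>
      intro s
      obtain ⟨hE, hzero⟩ := hpath j
      have h1 := hcyc1 _ _ hE s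
      have h2 := hcyc2 _ _ hE s
      rw [hzero] at h1 h2
      have : yS (v j.castSucc) s = yS (v j.succ) s := by omega
      rw [← this, ih]
  have ht : yS (v (Fin.last n)) t = 0 := by rw [hconst (Fin.last n) t]; exact h0
  by_contra hne
  set i := v (Fin.last n) with hi
  have hsum2 : ∑ s ∈ ({t, t'} : Finset T), (1 - yS i s) = 2 := by
    rw [Finset.sum_pair hne, ht, hlast]; ring
  have hle : ∑ s ∈ ({t, t'} : Finset T), (1 - yS i s) ≤ ∑ s, (1 - yS i s) := by
    apply Finset.sum_le_sum_of_subset_of_nonneg (Finset.subset_univ _)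
    intro s _ _
    rcases hyS i s with h | h <;> rw [h] <;> norm_num
  have htot : ∑ s, (1 - yS i s) = 1 := by
    rw [Finset.sum_sub_distrib, Finset.sum_const, hsum i]
    simp [Finset.card_univ]
  omega
end

section
/- Let E be a finite set with positive, pairwise distinct weights w : E → ℝ, let p > 0 be a dominant power, and let F be a downward-closed family of subsets of E with ∅ ∈ F. Then the set A ∈ F maximizing ∑_{e ∈ A} w_e^p is unique. -/
lemma aux_contra {E : Type*} [Fintype E] [DecidableEq E]
    (w : E → ℝ) (hpos : ∀ e, 0 < w e) (hinj : Function.Injective w)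
    (p : ℝ) (hdom : DominantPower w p)
    (F : Set (Finset E))
    (hdown : ∀ A B : Finset E, A ⊆ B → B ∈ F → A ∈ F)
    (A B : Finset E) (hA : A ∈ F)
    (hBmax : ∀ C ∈ F, (∑ s ∈ C, w s ^ p) ≤ ∑ s ∈ B, w s ^ p)
    (e : E) (heA : e ∈ A) (heB : e ∉ B)
    (hmax : ∀ s ∈ B \ A, w s ≤ w e) : False := by
  classical
  set C : Finset E := (A ∩ B) ∪ {e} with hC
  have hCsub : C ⊆ A := by
    intro x hx
    rcases Finset.mem_union.1 hx with h | h
    · exact (Finset.mem_inter.1 h).1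
    · simpa [Finset.mem_singleton.1 h] using heA
  have hCF : C ∈ F := hdown C A hCsub hA
  have heAB : e ∉ A ∩ B := fun h => heB (Finset.mem_inter.1 h).2
  have hCsum : (∑ s ∈ C, w s ^ p) = (∑ s ∈ A ∩ B, w s ^ p) + w e ^ p := by
    rw [hC, Finset.sum_union (by simp [Finset.disjoint_singleton_right, heAB])]
    simp
  have hBsplit : (∑ s ∈ B, w s ^ p) = (∑ s ∈ A ∩ B, w s ^ p) + ∑ s ∈ B \ A, w s ^ p := by
    rw [← Finset.sum_union (Finset.disjoint_sdiff.mono_left Finset.inter_subset_left)]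
    congr 1
    ext x
    simp only [Finset.mem_union, Finset.mem_inter, Finset.mem_sdiff]
    tauto
  have hlt : (∑ s ∈ B \ A, w s ^ p) < w e ^ p := by
    calc (∑ s ∈ B \ A, w s ^ p)
        ≤ ∑ s ∈ Finset.univ.filter (fun s => w s < w e), w s ^ p := by
          apply Finset.sum_le_sum_of_subset_of_nonneg
          · intro s hs
            have hsB := (Finset.mem_sdiff.1 hs).1
            have hne : w s ≠ w e := fun h => heB (hinj h ▸ hsB)
            simp only [Finset.mem_filter, Finset.mem_univ, true_and]
            exact lt_of_le_of_ne (hmax s hs) hne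
          · intro s _ _
            exact le_of_lt (Real.rpow_pos_of_pos (hpos s) p)
      _ < w e ^ p := hdom e
  have hCB := hBmax C hCF
  rw [hCsum, hBsplit] at hCB
  linarith

/-- For positive, pairwise distinct weights, a dominant power `p > 0`, and a
downward-closed family `F` of subsets of `E` with `∅ ∈ F`, the set `A ∈ F`
maximizing `∑_{e ∈ A} w e ^ p` over `F` is unique. -/
theorem maximizer_unique {E : Type*} [Fintype E]
    (w : E → ℝ) (hpos : ∀ e, 0 < w e) (hinj : Function.Injective w)
    (p : ℝ) (hp : 0 < p) (hdom : DominantPower w p)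
    (F : Set (Finset E))
    (hdown : ∀ A B : Finset E, A ⊆ B → B ∈ F → A ∈ F)
    (hempty : (∅ : Finset E) ∈ F) :
    ∃! A : Finset E, A ∈ F ∧ ∀ B ∈ F, (∑ s ∈ B, w s ^ p) ≤ ∑ s ∈ A, w s ^ p := by
  classical
  obtain ⟨A, hAmem, hAmax⟩ :=
    Finset.exists_max_image (Finset.univ.filter (· ∈ F)) (fun B => ∑ s ∈ B, w s ^ p)
      ⟨∅, by simp [hempty]⟩
  have hAF : A ∈ F := by simpa using hAmem
  have hAmax' : ∀ B ∈ F, (∑ s ∈ B, w s ^ p) ≤ ∑ s ∈ A, w s ^ p := by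
    intro B hB
    exact hAmax B (by simp [hB])
  refine ⟨A, ⟨hAF, hAmax'⟩, ?_⟩
  rintro B ⟨hBF, hBmax⟩
  by_contra hne
  have hD : ((A \ B) ∪ (B \ A)).Nonempty := by
    rw [Finset.nonempty_iff_ne_empty]
    intro h
    apply hne
    have h1 : A \ B = ∅ := Finset.union_eq_empty.1 h |>.1
    have h2 : B \ A = ∅ := Finset.union_eq_empty.1 h |>.2
    exact Finset.Subset.antisymm (Finset.sdiff_eq_empty_iff_subset.1 h2)
      (Finset.sdiff_eq_empty_iff_subset.1 h1)
  obtain ⟨e, heD, hemax⟩ := Finset.exists_max_image _ w hD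
  rcases Finset.mem_union.1 heD with h | h
  · obtain ⟨heA, heB⟩ := Finset.mem_sdiff.1 h
    exact aux_contra w hpos hinj p hdom F hdown A B hAF hBmax e heA heB
      (fun s hs => hemax s (Finset.mem_union_right _ hs))
  · obtain ⟨heB, heA⟩ := Finset.mem_sdiff.1 h
    exact aux_contra w hpos hinj p hdom F hdown B A hBF hAmax' e heB heA
      (fun s hs => hemax s (Finset.mem_union_left _ hs))
end
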